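/- (Kato's inequality.) Let G = (V,E) be a locally finite graph, θ a phase and q : V → ℝ. Then for every finitely supported f : V → ℂ one has Q_Δ(|f|) + Q_q(|f|) ≤ Q_θ(f) + Q_q(f), where |f| denotes the pointwise absolute value of f. -/

import Mathlib

open scoped BigOperators

noncomputable section

variable {V : Type*} [DecidableEq V] (G : SimpleGraph V) [DecidableRel G.Adj]

/-- The squared `ℓ²`-norm `‖f‖² = ∑_x |f x|²` of a (finitely supported) function. -/
def qNormSq (f : V → ℂ) : ℝ := ∑' x, ‖f x‖ ^ 2

/-- The quadratic form of the Laplacian: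
`Q_Δ(f) = (1/2) ∑_{x ~ y} |f x - f y|²` (sum over ordered pairs of adjacent vertices). -/
def qLap (f : V → ℂ) : ℝ :=
  (1 / 2) * ∑' (x : V), ∑' (y : V), if G.Adj x y then ‖f x - f y‖ ^ 2 else 0

/-- The magnetic quadratic form
`Q_θ(f) = (1/2) ∑_{x ~ y} |f x - e^{iθ(x,y)} f y|²`. -/
def qMag (θ : V → V → ℝ) (f : V → ℂ) : ℝ :=
  (1 / 2) * ∑' (x : V), ∑' (y : V),
    if G.Adj x y then ‖f x - Complex.exp (Complex.I * (θ x y)) * f y‖ ^ 2 else 0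

/-- The quadratic form of a potential: `Q_q(f) = ∑_x q x * |f x|²`. -/
def qPot (q : V → ℝ) (f : V → ℂ) : ℝ := ∑' x, q x * ‖f x‖ ^ 2

variable [G.LocallyFinite]

/-- The quadratic form of the degree: `Q_deg(f) = ∑_x deg x * |f x|²`. -/
def qDeg (f : V → ℂ) : ℝ := ∑' x, (G.degree x : ℝ) * ‖f x‖ ^ 2

/-- Twice the number of undirected edges of the subgraph induced on `W`,
i.e. the number of ordered pairs of adjacent vertices in `W × W`. -/
def edgesTwice (W : Finset V) : ℕ := ((W ×ˢ W).filter fun p => G.Adj p.1 p.2).card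

/-- The cardinality `|∂W|` of the edge boundary of `W`. -/
def bdryCard (W : Finset V) : ℕ :=
  ∑ x ∈ W, ((G.neighborFinset x).filter fun y => y ∉ W).card

/-- `(G, q)` is `(a,k)`-sparse: `2|E_W| ≤ k|W| + a(|∂W| + q₊(W))` for all finite `W`. -/
def IsSparse (q : V → ℝ) (a k : ℝ) : Prop :=
  ∀ W : Finset V,
    (edgesTwice G W : ℝ) ≤ k * W.card + a * ((bdryCard G W : ℝ) + ∑ x ∈ W, max (q x) 0)

/-- The potential `q` belongs to the class `K_α`:
`Q_{q₋}(f) ≤ α (Q_Δ(f) + Q_{q₊}(f)) + C ‖f‖²` for all finitely supported `f`. -/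
def KClass (q : V → ℝ) (α : ℝ) : Prop :=
  ∃ C : ℝ, 0 ≤ C ∧ ∀ f : V → ℂ, (Function.support f).Finite →
    qPot (fun x => max (-q x) 0) f ≤
      α * (qLap G f + qPot (fun x => max (q x) 0) f) + C * qNormSq f

/-- The potential `q` belongs to the magnetic class `K_α^θ`:
`Q_{q₋}(f) ≤ α (Q_θ(f) + Q_{q₊}(f)) + C ‖f‖²` for all finitely supported `f`. -/
def KClassTheta (θ : V → V → ℝ) (q : V → ℝ) (α : ℝ) : Prop :=
  ∃ C : ℝ, 0 ≤ C ∧ ∀ f : V → ℂ, (Function.support f).Finite →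
    qPot (fun x => max (-q x) 0) f ≤
      α * (qMag G θ f + qPot (fun x => max (q x) 0) f) + C * qNormSq f

/-- The Cheeger (isoperimetric) constant of `U ⊆ V`:
the infimum over nonempty finite `W ⊆ U` of `(|∂W| + q(W)) / (deg(W) + q(W))`,
with the convention that the quotient is `0` when the denominator vanishes. -/
def cheeger (q : V → ℝ) (U : Set V) : ℝ :=
  ⨅ W : {W : Finset V // ↑W ⊆ U ∧ W.Nonempty},
    if (∑ x ∈ W.1, ((G.degree x : ℝ) + q x)) = 0 then 0
    else ((bdryCard G W.1 : ℝ) + ∑ x ∈ W.1, q x) / ∑ x ∈ W.1, ((G.degree x : ℝ) + q x)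

/-- The Cheeger constant at infinity: `α_∞ = sup over finite K of α_{V∖K}`. -/
def cheegerInfty (q : V → ℝ) : ℝ :=
  ⨆ K : Finset V, cheeger G q ((↑K : Set V)ᶜ)

set_option maxHeartbeats 1000000 in
/-- Kato's inequality: for every phase `θ`, potential `q` and finitely
supported `f : V → ℂ`, `Q_Δ(|f|) + Q_q(|f|) ≤ Q_θ(f) + Q_q(f)`. -/
theorem stmt9 [Countable V] (θ : V → V → ℝ) (hθ : ∀ x y, θ x y = -θ y x) (q : V → ℝ)
    (f : V → ℂ) (hf : (Function.support f).Finite) :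
    qLap G (fun x => (‖f x‖ : ℂ)) + qPot q (fun x => (‖f x‖ : ℂ))
      ≤ qMag G θ f + qPot q f := by
  have hpot : qPot q (fun x => (‖f x‖ : ℂ)) = qPot q f := by
    unfold qPot
    refine tsum_congr fun x => ?_
    simp [Complex.norm_real]
  rw [hpot]
  refine add_le_add ?_ le_rfl
  unfold qLap qMag
  have hpt : ∀ x y, G.Adj x y →
      ‖(‖f x‖ : ℂ) - (‖f y‖ : ℂ)‖ ^ 2 ≤ ‖f x - Complex.exp (Complex.I * (θ x y)) * f y‖ ^ 2 := by
    intro x y _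
    have h1 : ‖Complex.exp (Complex.I * (θ x y)) * f y‖ = ‖f y‖ := by
      rw [norm_mul]
      simp [Complex.norm_exp_I_mul_ofReal]
    have h2 : ‖(‖f x‖ : ℂ) - (‖f y‖ : ℂ)‖ = |‖f x‖ - ‖f y‖| := by
      rw [← Complex.ofReal_sub, Complex.norm_real, Real.norm_eq_abs]
    rw [h2]
    have h3 := abs_norm_sub_norm_le (f x) (Complex.exp (Complex.I * (θ x y)) * f y)
    rw [h1] at h3
    exact pow_le_pow_left₀ (abs_nonneg _) h3 2
  set S := hf.toFinset with hS
  set T : Finset V := S ∪ S.biUnion (fun y => G.neighborFinset y) with hT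
  have hz : ∀ x ∉ T, f x = 0 ∧ ∀ y, G.Adj x y → f y = 0 := by
    intro x hx
    have hx1 : x ∉ S := fun h => hx (Finset.mem_union_left _ h)
    have hx2 : ∀ y, y ∈ S → x ∉ G.neighborFinset y := fun y hy hmem =>
      hx (Finset.mem_union_right _ (Finset.mem_biUnion.mpr ⟨y, hy, hmem⟩))
    constructor
    · by_contra h
      exact hx1 (hf.mem_toFinset.mpr h)
    · intro y hadj
      by_contra h
      exact hx2 y (hf.mem_toFinset.mpr h)
        (by simpa [SimpleGraph.mem_neighborFinset] using hadj.symm)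
  have hsumIn : ∀ (g : V → V → ℝ) (x : V),
      Summable (fun y => if G.Adj x y then g x y else 0) := fun g x =>
    summable_of_ne_finset_zero (s := G.neighborFinset x) (fun y hy => by
      rw [SimpleGraph.mem_neighborFinset] at hy
      simp [hy])
  have houter : ∀ (g : V → V → ℂ), (∀ x ∉ T, ∀ y, G.Adj x y → g x y = 0) →
      Summable (fun x => ∑' y, if G.Adj x y then ‖g x y‖ ^ 2 else 0) := by
    intro g hg
    refine summable_of_ne_finset_zero (s := T) (fun x hx => ?_)
    have : ∀ y, (if G.Adj x y then ‖g x y‖ ^ 2 else 0) = 0 := by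
      intro y
      split
      · next h => rw [hg x hx y h]; simp
      · rfl
    simp only [this, tsum_zero]
  have hsum1 : Summable (fun x => ∑' y,
      if G.Adj x y then ‖(‖f x‖ : ℂ) - (‖f y‖ : ℂ)‖ ^ 2 else 0) := by
    refine houter (fun x y => (‖f x‖ : ℂ) - (‖f y‖ : ℂ)) (fun x hx y hadj => ?_)
    simp only [(hz x hx).1, (hz x hx).2 y hadj, norm_zero, Complex.ofReal_zero, sub_self]
  have hsum2 : Summable (fun x => ∑' y,
      if G.Adj x y then ‖f x - Complex.exp (Complex.I * (θ x y)) * f y‖ ^ 2 else 0) := by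
    refine houter (fun x y => f x - Complex.exp (Complex.I * (θ x y)) * f y)
      (fun x hx y hadj => ?_)
    simp only [(hz x hx).1, (hz x hx).2 y hadj, mul_zero, sub_self]
  refine mul_le_mul_of_nonneg_left ?_ (by norm_num)
  refine Summable.tsum_le_tsum (fun x => ?_) hsum1 hsum2
  refine Summable.tsum_le_tsum (fun y => ?_)
    (hsumIn (fun x y => ‖(‖f x‖ : ℂ) - (‖f y‖ : ℂ)‖ ^ 2) x)
    (hsumIn (fun x y => ‖f x - Complex.exp (Complex.I * (θ x y)) * f y‖ ^ 2) x)
  split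
  · next h => exact hpt x y h
  · exact le_rfl

end
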